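/- Let N ≥ 1, α ∈ [0,1], and σ₁, σ₂ ∈ ℝ. Let F₁ ∈ ℝ^{N×N} be strictly lower triangular and let F₂ ∈ ℝ^{N×N} be of subdiagonal form whose entry in the last row is zero (f_{2,N} = 0). Then the last standard basis vector e_N is an eigenvector of B with eigenvalue (1−α)σ₂², i.e., B·e_N = (1−α)σ₂²·e_N. In particular, the smallest eigenvalue of the symmetric matrix B is at most (1−α)σ₂². -/

import Mathlib

open Matrix

noncomputable section

/-- A matrix is strictly lower triangular: `A i j = 0` whenever `i ≤ j`. -/
def Slt {N : ℕ} (A : Matrix (Fin N) (Fin N) ℝ) : Prop :=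
  ∀ i j : Fin N, i ≤ j → A i j = 0

/-- A matrix is of subdiagonal form: only entries immediately below the
diagonal may be nonzero. -/
def Subdiag {N : ℕ} (A : Matrix (Fin N) (Fin N) ℝ) : Prop :=
  ∀ i j : Fin N, (i : ℕ) ≠ (j : ℕ) + 1 → A i j = 0

/-- `Q₂ = σ₁²F₂F₂ᵀ + σ₂²I`. -/
def Q2 {N : ℕ} (σ₁ σ₂ : ℝ) (F₂ : Matrix (Fin N) (Fin N) ℝ) :
    Matrix (Fin N) (Fin N) ℝ :=
  σ₁ ^ 2 • (F₂ * F₂ᵀ) + σ₂ ^ 2 • 1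

/-- `B = α·Qs F₁ᵀF₁ Qs + (1−α)·Qs (I + F₂F₁)ᵀ(I + F₂F₁) Qs`. -/
def Bmat {N : ℕ} (α : ℝ) (F₁ F₂ Qs : Matrix (Fin N) (Fin N) ℝ) :
    Matrix (Fin N) (Fin N) ℝ :=
  α • (Qs * F₁ᵀ * F₁ * Qs)
    + (1 - α) • (Qs * (1 + F₂ * F₁)ᵀ * (1 + F₂ * F₁) * Qs)

/-- If the last-row entry of the subdiagonal matrix `F₂` is
zero, then the last standard basis vector is an eigenvector of `B` with
eigenvalue `(1−α)σ₂²`; in particular the smallest eigenvalue of the symmetric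
matrix `B` is at most `(1−α)σ₂²`. -/
/- A PSD real matrix with `A²v = μ²v` and `μ ≥ 0` satisfies `Av = μv`. -/
lemma psd_sq_eigen {N : ℕ} {A : Matrix (Fin N) (Fin N) ℝ} (hA : A.PosSemidef)
    (v : Fin N → ℝ) (μ : ℝ) (hμ : 0 ≤ μ)
    (h : A *ᵥ (A *ᵥ v) = (μ ^ 2) • v) : A *ᵥ v = μ • v := by
  rcases eq_or_lt_of_le hμ with hμ0 | hμpos
  · -- μ = 0 case
    subst hμ0
    rw [show (0:ℝ)^2 = 0 by norm_num, zero_smul] at h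
    rw [zero_smul]
    rw [← dotProduct_self_eq_zero (v := A *ᵥ v)]
    have hsym : Aᵀ = A := hA.1
    have e1 : (A *ᵥ v) ⬝ᵥ (A *ᵥ v) = ((A *ᵥ v) ᵥ* A) ⬝ᵥ v := dotProduct_mulVec _ _ _
    have e2 : (A *ᵥ v) ᵥ* A = A *ᵥ (A *ᵥ v) := by
      conv_lhs => rw [← hsym]
      rw [Matrix.vecMul_transpose, hsym]
    rw [e1, e2, h]
    simp
  · set u : Fin N → ℝ := A *ᵥ v - μ • v with hu
    have hAu : A *ᵥ u = (-μ) • u := by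
      rw [hu, Matrix.mulVec_sub, mulVec_smul, h]
      ext i
      simp only [Pi.sub_apply, Pi.smul_apply, smul_eq_mul]
      ring
    have hA_aux : ∀ w : Fin N → ℝ, (0:ℝ) ≤ w ⬝ᵥ w := fun w =>
      Finset.sum_nonneg fun i _ => mul_self_nonneg (w i)
    have h1 : 0 ≤ u ⬝ᵥ (A *ᵥ u) := by simpa using hA.dotProduct_mulVec_nonneg u
    have h2 : u ⬝ᵥ (A *ᵥ u) = (-μ) * (u ⬝ᵥ u) := by
      rw [hAu]; simp [dotProduct_smul]
    have h3 : 0 ≤ u ⬝ᵥ u := by simpa using hA_aux u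
    have h4 : u ⬝ᵥ u = 0 := by nlinarith
    have h5 : u = 0 := dotProduct_self_eq_zero.mp h4
    have := sub_eq_zero.mp h5
    exact this

lemma Bmat_eigen_key {N : ℕ} (α σ₁ σ₂ : ℝ)
    (F₁ F₂ : Matrix (Fin N) (Fin N) ℝ) (hF₁ : Slt F₁)
    (i₀ : Fin N) (hi₀ : ∀ i : Fin N, i ≤ i₀)
    (hlast : ∀ j : Fin N, F₂ i₀ j = 0)
    (Qs : Matrix (Fin N) (Fin N) ℝ) (hQs : Qs.PosSemidef)
    (hQsq : Qs * Qs = Q2 σ₁ σ₂ F₂) :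
    (Bmat α F₁ F₂ Qs) *ᵥ (Pi.single i₀ 1 : Fin N → ℝ)
      = ((1 - α) * σ₂ ^ 2) • (Pi.single i₀ 1 : Fin N → ℝ) := by
  set e : Fin N → ℝ := Pi.single i₀ 1 with he
  have h1 : F₁ *ᵥ e = 0 := by
    ext i
    rw [he, Matrix.mulVec_single]
    simp [hF₁ i i₀ (hi₀ i)]
  have h2 : F₂ᵀ *ᵥ e = 0 := by
    ext i
    rw [he, Matrix.mulVec_single]
    simp [Matrix.transpose_apply, hlast i]
  have h3 : (Q2 σ₁ σ₂ F₂) *ᵥ e = (σ₂ ^ 2) • e := by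
    rw [Q2, Matrix.add_mulVec, Matrix.smul_mulVec, Matrix.smul_mulVec,
      ← Matrix.mulVec_mulVec, h2, Matrix.mulVec_zero, Matrix.one_mulVec]
    simp
  have h4 : Qs *ᵥ e = |σ₂| • e := by
    apply psd_sq_eigen hQs e |σ₂| (abs_nonneg σ₂)
    rw [Matrix.mulVec_mulVec, hQsq, h3, sq_abs]
  have habs : |σ₂| * |σ₂| = σ₂ ^ 2 := by rw [← sq_abs σ₂]; ring
  set M : Matrix (Fin N) (Fin N) ℝ := 1 + F₂ * F₁ with hM
  have hMe : M *ᵥ e = e := by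
    rw [hM, Matrix.add_mulVec, Matrix.one_mulVec, ← Matrix.mulVec_mulVec, h1,
      Matrix.mulVec_zero, add_zero]
  have hMTe : Mᵀ *ᵥ e = e := by
    rw [hM, Matrix.transpose_add, Matrix.transpose_one, Matrix.transpose_mul,
      Matrix.add_mulVec, Matrix.one_mulVec, ← Matrix.mulVec_mulVec, h2,
      Matrix.mulVec_zero, add_zero]
  have t1 : (Qs * F₁ᵀ * F₁ * Qs) *ᵥ e = 0 := by
    rw [← Matrix.mulVec_mulVec, h4, Matrix.mulVec_smul, ← Matrix.mulVec_mulVec,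
      ← Matrix.mulVec_mulVec, h1]
    simp
  have t2 : (Qs * Mᵀ * M * Qs) *ᵥ e = (σ₂ ^ 2) • e := by
    rw [← Matrix.mulVec_mulVec, h4, Matrix.mulVec_smul, ← Matrix.mulVec_mulVec,
      ← Matrix.mulVec_mulVec, hMe, hMTe, h4, smul_smul, habs]
  rw [Bmat, Matrix.add_mulVec, Matrix.smul_mulVec, Matrix.smul_mulVec,
    ← hM, t1, t2, smul_zero, zero_add, smul_smul]

theorem Bmat_last_basis_eigenvector {N : ℕ} (hN : 1 ≤ N)
    (α : ℝ) (hα : α ∈ Set.Icc (0 : ℝ) 1) (σ₁ σ₂ : ℝ)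
    (F₁ F₂ : Matrix (Fin N) (Fin N) ℝ) (hF₁ : Slt F₁) (hF₂ : Subdiag F₂)
    (hlast : ∀ j : Fin N, F₂ ⟨N - 1, by omega⟩ j = 0)
    (Qs : Matrix (Fin N) (Fin N) ℝ) (hQs : Qs.PosSemidef)
    (hQsq : Qs * Qs = Q2 σ₁ σ₂ F₂) :
    (Bmat α F₁ F₂ Qs).mulVec (Pi.single (⟨N - 1, by omega⟩ : Fin N) 1 : Fin N → ℝ)
        = ((1 - α) * σ₂ ^ 2) • (Pi.single (⟨N - 1, by omega⟩ : Fin N) 1 : Fin N → ℝ)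
    ∧ ∀ hB : (Bmat α F₁ F₂ Qs).IsHermitian,
        ∃ i : Fin N, hB.eigenvalues i ≤ (1 - α) * σ₂ ^ 2 := by
  have hi₀ : ∀ i : Fin N, i ≤ (⟨N - 1, by omega⟩ : Fin N) := by
    intro i
    rw [Fin.le_def]
    have := i.isLt
    simp only
    omega
  have key := Bmat_eigen_key α σ₁ σ₂ F₁ F₂ hF₁ ⟨N - 1, by omega⟩ hi₀ hlast Qs hQs hQsq
  refine ⟨key, ?_⟩
  intro hB
  set c : ℝ := (1 - α) * σ₂ ^ 2 with hc
  set e : Fin N → ℝ := Pi.single (⟨N - 1, by omega⟩ : Fin N) 1 with he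
  have hmem : c ∈ spectrum ℝ (Bmat α F₁ F₂ Qs) := by
    rw [spectrum.mem_iff]
    intro hU
    obtain ⟨u, hu⟩ := hU
    have hzero : (algebraMap ℝ (Matrix (Fin N) (Fin N) ℝ) c - Bmat α F₁ F₂ Qs) *ᵥ e = 0 := by
      rw [Matrix.sub_mulVec, key, Algebra.algebraMap_eq_smul_one,
        Matrix.smul_mulVec, Matrix.one_mulVec, sub_self]
    have he0 : e = 0 := by
      have h9 : ((↑u⁻¹ : Matrix (Fin N) (Fin N) ℝ) * (↑u : Matrix (Fin N) (Fin N) ℝ)) *ᵥ e = 0 := by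
        rw [← Matrix.mulVec_mulVec, hu, hzero, Matrix.mulVec_zero]
      rwa [u.inv_mul, Matrix.one_mulVec] at h9
    have : e (⟨N - 1, by omega⟩ : Fin N) = 1 := by rw [he]; simp
    rw [he0] at this
    simp at this
  rw [hB.spectrum_real_eq_range_eigenvalues] at hmem
  obtain ⟨i, hi⟩ := hmem
  exact ⟨i, le_of_eq hi⟩

end
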